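/- arXiv:2312.10338 — 3 statements merged into one kernel-verified Lean document; each statement's English description precedes it below -/
import Mathlib

section
/- Let p₁, p₂, p₃ be affinely independent points in the Euclidean plane ℝ², let L be the affine span of {p₁, p₂}, and let b₃(x) denote the barycentric coordinate of x with respect to the vertex p₃ of the triangle. If x_o, x_n ∈ ℝ² are points whose connecting segment meets L (there exists t ∈ [0,1] with (1−t) • x_o + t • x_n ∈ L), then |b₃(x_n)| ≤ ‖x_n − x_o‖ / dist(p₃, L). -/
open Finset

/-- Quantitative local diminishing of the far-vertex barycentric coordinate
(Proposition 2): if `p 0, p 1, p 2` are affinely independent points of the plane,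
`L` is the affine span of `{p 0, p 1}`, and the segment from `x_o` to `x_n` meets `L`,
then any barycentric coefficients `c` representing `x_n` with respect to `p`
satisfy `|c 2| ≤ ‖x_n − x_o‖ / dist(p 2, L)`. -/
theorem barycentric_far_vertex_diminishes_on_edge_crossing
    (p : Fin 3 → EuclideanSpace ℝ (Fin 2))
    (hp : AffineIndependent ℝ p)
    (L : AffineSubspace ℝ (EuclideanSpace ℝ (Fin 2)))
    (hL : L = affineSpan ℝ {p 0, p 1})
    (xo xn : EuclideanSpace ℝ (Fin 2))
    (hseg : ∃ t ∈ Set.Icc (0 : ℝ) 1, (1 - t) • xo + t • xn ∈ L)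
    (c : Fin 3 → ℝ)
    (hc1 : ∑ i, c i = 1)
    (hcx : Finset.univ.affineCombination ℝ p c = xn) :
    |c 2| ≤ ‖xn - xo‖ / Metric.infDist (p 2) (L : Set (EuclideanSpace ℝ (Fin 2))) := by
  obtain ⟨t, ht, hyL⟩ := hseg
  set y : EuclideanSpace ℝ (Fin 2) := (1 - t) • xo + t • xn with hy
  set v : EuclideanSpace ℝ (Fin 2) := p 1 - p 0 with hvdef
  set w : EuclideanSpace ℝ (Fin 2) := p 2 - p 0 with hwdef
  have hv : v ≠ 0 := sub_ne_zero.2 (fun h => by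
    have := hp.injective h; simp at this)
  have hvv : (inner ℝ v v : ℝ) ≠ 0 := fun h => hv (inner_self_eq_zero.1 h)
  set α : ℝ := (inner ℝ v w : ℝ) / (inner ℝ v v : ℝ) with hα
  set n : EuclideanSpace ℝ (Fin 2) := w - α • v with hndef
  have hnv : (inner ℝ n v : ℝ) = 0 := by
    rw [hndef, inner_sub_left, real_inner_smul_left, hα, div_mul_cancel₀ _ hvv,
      real_inner_comm, sub_self]
  -- p 2 is not in the affine span of p 0, p 1
  have h2 : p 2 ∉ affineSpan ℝ ({p 0, p 1} : Set (EuclideanSpace ℝ (Fin 2))) := by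
    have := hp.notMem_affineSpan_diff 2 {0, 1}
    have himg : p '' (({0, 1} : Set (Fin 3)) \ {2}) = {p 0, p 1} := by
      have : (({0, 1} : Set (Fin 3)) \ {2}) = {0, 1} := by
        ext i; fin_cases i <;> simp
      rw [this, Set.image_pair]
    rwa [himg] at this
  have hn : n ≠ 0 := by
    intro h0
    apply h2
    have hw : w = α • v := by rwa [hndef, sub_eq_zero] at h0
    have : p 2 = AffineMap.lineMap (p 0) (p 1) α := by
      rw [AffineMap.lineMap_apply]
      have : p 2 = w + p 0 := by rw [hwdef]; abel
      rw [this, hw]; rfl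
    rw [this]
    exact AffineMap.lineMap_mem_affineSpan_pair α (p 0) (p 1)
  have hnn : (0:ℝ) < ‖n‖ := norm_pos_iff.2 hn
  -- xn - p 0 = c 1 • v + c 2 • w
  have hxn : xn = c 0 • p 0 + c 1 • p 1 + c 2 • p 2 := by
    rw [← hcx, Finset.univ.affineCombination_eq_linear_combination p c hc1,
      Fin.sum_univ_three]
  have hc0 : c 0 = 1 - c 1 - c 2 := by
    rw [Fin.sum_univ_three] at hc1; linarith
  have hxnp : xn - p 0 = c 1 • v + c 2 • w := by
    rw [hxn, hc0, hvdef, hwdef]; module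
  -- y - p 0 = s • v for some s
  have hyd : ∃ s : ℝ, y - p 0 = s • v := by
    have hp0 : p 0 ∈ L := by
      rw [hL]; exact mem_affineSpan ℝ (Set.mem_insert _ _)
    have hdir : y -ᵥ p 0 ∈ L.direction := AffineSubspace.vsub_mem_direction hyL hp0
    rw [hL, direction_affineSpan, vectorSpan_pair] at hdir
    obtain ⟨r, hr⟩ := Submodule.mem_span_singleton.1 hdir
    refine ⟨-r, ?_⟩
    rw [vsub_eq_sub, vsub_eq_sub] at hr
    rw [hvdef, ← hr]; module
  obtain ⟨s, hs⟩ := hyd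
  -- key inner product identity
  have hnw : (inner ℝ n w : ℝ) = ‖n‖ ^ 2 := by
    have : w = n + α • v := by rw [hndef]; abel
    rw [this, inner_add_right, real_inner_smul_right, hnv, real_inner_self_eq_norm_sq]
    ring
  have key : (inner ℝ n (xn - y) : ℝ) = c 2 * ‖n‖ ^ 2 := by
    have : xn - y = (xn - p 0) - (y - p 0) := by abel
    rw [this, hxnp, hs, inner_sub_right, inner_add_right, real_inner_smul_right,
      real_inner_smul_right, real_inner_smul_right, hnv, hnw]
    ring
  -- Cauchy-Schwarz bound
  have hbound : |c 2| * ‖n‖ ^ 2 ≤ ‖n‖ * ‖xn - y‖ := by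
    calc |c 2| * ‖n‖ ^ 2 = |(inner ℝ n (xn - y) : ℝ)| := by
          rw [key, abs_mul, abs_of_nonneg (by positivity : (0:ℝ) ≤ ‖n‖ ^ 2)]
      _ ≤ ‖n‖ * ‖xn - y‖ := abs_real_inner_le_norm n (xn - y)
  have hxy : ‖xn - y‖ ≤ ‖xn - xo‖ := by
    have : xn - y = (1 - t) • (xn - xo) := by rw [hy]; module
    rw [this, norm_smul, Real.norm_eq_abs, abs_of_nonneg (by linarith [ht.2])]
    have h0 := norm_nonneg (xn - xo)
    nlinarith [ht.1]
  have hc2n : |c 2| * ‖n‖ ≤ ‖xn - xo‖ := by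
    have h1 : (|c 2| * ‖n‖) * ‖n‖ ≤ ‖xn - xo‖ * ‖n‖ := by
      calc (|c 2| * ‖n‖) * ‖n‖ = |c 2| * ‖n‖ ^ 2 := by ring
        _ ≤ ‖n‖ * ‖xn - y‖ := hbound
        _ ≤ ‖n‖ * ‖xn - xo‖ := mul_le_mul_of_nonneg_left hxy (norm_nonneg n)
        _ = ‖xn - xo‖ * ‖n‖ := by ring
    exact le_of_mul_le_mul_right h1 hnn
  -- distance comparison
  set d := Metric.infDist (p 2) (L : Set (EuclideanSpace ℝ (Fin 2))) with hd
  have hdn : d ≤ ‖n‖ := by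
    have hqL : AffineMap.lineMap (p 0) (p 1) α ∈ L := by
      rw [hL]; exact AffineMap.lineMap_mem_affineSpan_pair α (p 0) (p 1)
    have : dist (p 2) (AffineMap.lineMap (p 0) (p 1) α) = ‖n‖ := by
      rw [dist_eq_norm, AffineMap.lineMap_apply]
      congr 1
      rw [hndef, hwdef, hvdef]
      simp [vsub_eq_sub, vadd_eq_add]
      module
    rw [hd, ← this]
    exact Metric.infDist_le_dist_of_mem hqL
  have hdpos : 0 < d := by
    have hclosed : IsClosed (L : Set (EuclideanSpace ℝ (Fin 2))) :=
      L.closed_of_finiteDimensional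
    have hne : (L : Set (EuclideanSpace ℝ (Fin 2))).Nonempty :=
      ⟨p 0, by rw [hL]; exact mem_affineSpan ℝ (Set.mem_insert _ _)⟩
    exact (hclosed.notMem_iff_infDist_pos hne).1 (by rw [hL]; exact h2)
  -- conclude
  have h1 : |c 2| ≤ ‖xn - xo‖ / ‖n‖ := (le_div_iff₀ hnn).2 hc2n
  calc |c 2| ≤ ‖xn - xo‖ / ‖n‖ := h1
    _ ≤ ‖xn - xo‖ / d := by
        apply div_le_div_of_nonneg_left (norm_nonneg _) hdpos hdn
end

section
/- (APIC P2G conserves angular momentum.) Let there be particles p with masses m_p, positions x_p ∈ ℝ³, velocities v_p ∈ ℝ³, and 3×3 real affine matrices B_p, and grid nodes i with positions x_i ∈ ℝ³, with transfer weights w_{p,i} ∈ ℝ satisfying, for every p: Σᵢ w_{p,i} = 1 and Σᵢ w_{p,i} (x_i − x_p) = 0. Suppose each D_p := Σᵢ w_{p,i} (x_i − x_p)(x_i − x_p)ᵀ is invertible, and define grid momenta P_i := Σ_p w_{p,i} m_p (v_p + B_p D_p⁻¹ (x_i − x_p)). Then Σᵢ x_i × P_i = Σ_p ( x_p × (m_p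 v_p) + m_p τ(B_p) ), where τ(A) := (A₃₂ − A₂₃, A₁₃ − A₃₁, A₂₁ − A₁₂) ∈ ℝ³ for a 3×3 matrix A, and × is the cross product in ℝ³. -/
open Matrix Finset

/-- APIC particle-to-grid transfer conserves angular momentum: the total grid angular
momentum after P2G equals the total particle angular momentum
`∑ p, (x_p × m_p v_p + m_p τ(B_p))`. -/
theorem apic_p2g_conserves_angular_momentum
    {nP nG : ℕ}
    (m : Fin nP → ℝ) (xP : Fin nP → Fin 3 → ℝ) (v : Fin nP → Fin 3 → ℝ)
    (B : Fin nP → Matrix (Fin 3) (Fin 3) ℝ)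
    (xG : Fin nG → Fin 3 → ℝ)
    (w : Fin nP → Fin nG → ℝ)
    (hpart : ∀ p, ∑ i, w p i = 1)
    (hlin : ∀ p, ∑ i, w p i • (xG i - xP p) = 0)
    (D : Fin nP → Matrix (Fin 3) (Fin 3) ℝ)
    (hD : ∀ p, D p = ∑ i, w p i • Matrix.vecMulVec (xG i - xP p) (xG i - xP p))
    (hDinv : ∀ p, IsUnit (D p))
    (P : Fin nG → Fin 3 → ℝ)
    (hP : ∀ i, P i = ∑ p, w p i • (m p • (v p + (B p * (D p)⁻¹) *ᵥ (xG i - xP p))))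
    (τ : Matrix (Fin 3) (Fin 3) ℝ → Fin 3 → ℝ)
    (hτ : ∀ A, τ A = ![A 2 1 - A 1 2, A 0 2 - A 2 0, A 1 0 - A 0 1]) :
    ∑ i, xG i ⨯₃ P i = ∑ p, (xP p ⨯₃ (m p • v p) + m p • τ (B p)) := by
  have hdet : ∀ p, IsUnit (D p).det := fun p => (Matrix.isUnit_iff_isUnit_det _).mp (hDinv p)
  have main : ∀ p, ∑ i, w p i • (xG i ⨯₃ (m p • (v p + (B p * (D p)⁻¹) *ᵥ (xG i - xP p)))) =
      xP p ⨯₃ (m p • v p) + m p • τ (B p) := by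
    intro p
    set C := B p * (D p)⁻¹ with hC
    have hd : ∀ a, ∑ i, w p i * (xG i a - xP p a) = 0 := by
      intro a
      have h := congrFun (hlin p) a
      simpa [Finset.sum_apply] using h
    have hx : ∀ a, ∑ i, w p i * xG i a = xP p a := by
      intro a
      have h := hd a
      have h2 : ∑ i, w p i * xP p a = xP p a := by
        rw [← Finset.sum_mul, hpart p, one_mul]
      have h3 : ∑ i, (w p i * xG i a - w p i * xP p a) =
          ∑ i, w p i * xG i a - ∑ i, w p i * xP p a := Finset.sum_sub_distrib _ _
      have h4 : ∑ i, (w p i * xG i a - w p i * xP p a) = 0 := by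
        rw [← h]
        exact Finset.sum_congr rfl fun i _ => by ring
      rw [h4, h2] at h3
      linarith
    have hDc : ∀ a c, D p a c = ∑ i, w p i * ((xG i a - xP p a) * (xG i c - xP p c)) := by
      intro a c
      rw [hD]
      simp [Matrix.sum_apply, Matrix.vecMulVec_apply]
    have hCB : C * D p = B p := by
      rw [hC, Matrix.mul_assoc, Matrix.nonsing_inv_mul _ (hdet p), Matrix.mul_one]
    have expand : ∀ (i : Fin nG) b, (C *ᵥ (xG i - xP p)) b = ∑ c, C b c * (xG i c - xP p c) := by
      intro i b
      simp [Matrix.mulVec, dotProduct]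
    have hKey : ∀ a b, ∑ i, w p i * ((xG i a - xP p a) * (C *ᵥ (xG i - xP p)) b) = B p b a := by
      intro a b
      calc ∑ i, w p i * ((xG i a - xP p a) * (C *ᵥ (xG i - xP p)) b)
          = ∑ i, ∑ c, C b c * (w p i * ((xG i a - xP p a) * (xG i c - xP p c))) := by
            refine Finset.sum_congr rfl fun i _ => ?_
            rw [expand i b, Finset.mul_sum, Finset.mul_sum]
            exact Finset.sum_congr rfl fun c _ => by ring
        _ = ∑ c, C b c * D p a c := by
            rw [Finset.sum_comm]
            refine Finset.sum_congr rfl fun c _ => ?_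
            rw [hDc a c, Finset.mul_sum]
        _ = ∑ c, C b c * D p c a := by
            refine Finset.sum_congr rfl fun c _ => ?_
            congr 1
            rw [hDc a c, hDc c a]
            exact Finset.sum_congr rfl fun i _ => by ring
        _ = (C * D p) b a := (Matrix.mul_apply).symm
        _ = B p b a := by rw [hCB]
    have hCd : ∀ b, ∑ i, w p i * (C *ᵥ (xG i - xP p)) b = 0 := by
      intro b
      calc ∑ i, w p i * (C *ᵥ (xG i - xP p)) b
          = ∑ i, ∑ c, C b c * (w p i * (xG i c - xP p c)) := by
            refine Finset.sum_congr rfl fun i _ => ?_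
            rw [expand i b, Finset.mul_sum]
            exact Finset.sum_congr rfl fun c _ => by ring
        _ = ∑ c, C b c * ∑ i, w p i * (xG i c - xP p c) := by
            rw [Finset.sum_comm]
            exact Finset.sum_congr rfl fun c _ => (Finset.mul_sum _ _ _).symm
        _ = 0 := by simp [hd]
    have hxC : ∀ a b, ∑ i, w p i * (xG i a * (C *ᵥ (xG i - xP p)) b) = B p b a := by
      intro a b
      have h : ∀ i : Fin nG, w p i * (xG i a * (C *ᵥ (xG i - xP p)) b) =
          w p i * ((xG i a - xP p a) * (C *ᵥ (xG i - xP p)) b) +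
            xP p a * (w p i * (C *ᵥ (xG i - xP p)) b) := fun i => by ring
      rw [Finset.sum_congr rfl fun i _ => h i, Finset.sum_add_distrib, hKey,
        ← Finset.mul_sum, hCd, mul_zero, add_zero]
    have hmain2 : ∀ a b, ∑ i, w p i * (xG i a * (m p * (v p b + (C *ᵥ (xG i - xP p)) b))) =
        xP p a * (m p * v p b) + m p * B p b a := by
      intro a b
      have h : ∀ i : Fin nG, w p i * (xG i a * (m p * (v p b + (C *ᵥ (xG i - xP p)) b))) =
          (m p * v p b) * (w p i * xG i a) +
            m p * (w p i * (xG i a * (C *ᵥ (xG i - xP p)) b)) := fun i => by ring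
      rw [Finset.sum_congr rfl fun i _ => h i, Finset.sum_add_distrib,
        ← Finset.mul_sum, ← Finset.mul_sum, hx, hxC]
      ring
    funext k
    rw [Finset.sum_apply]
    have esm : ∀ (i : Fin nG) (b : Fin 3),
        (m p • (v p + C *ᵥ (xG i - xP p))) b = m p * (v p b + (C *ᵥ (xG i - xP p)) b) := by
      intro i b; rfl
    fin_cases k
    · show ∑ i, (w p i • (xG i ⨯₃ (m p • (v p + C *ᵥ (xG i - xP p))))) (0 : Fin 3) =
          (xP p ⨯₃ (m p • v p) + m p • τ (B p)) (0 : Fin 3)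
      have hL : ∀ i : Fin nG,
          (w p i • (xG i ⨯₃ (m p • (v p + C *ᵥ (xG i - xP p))))) (0 : Fin 3) =
          w p i * (xG i 1 * (m p * (v p 2 + (C *ᵥ (xG i - xP p)) 2))) -
            w p i * (xG i 2 * (m p * (v p 1 + (C *ᵥ (xG i - xP p)) 1))) := by
        intro i
        rw [Pi.smul_apply, cross_apply]
        simp [esm]
        ring
      rw [Finset.sum_congr rfl fun i _ => hL i, Finset.sum_sub_distrib,
        hmain2 1 2, hmain2 2 1]
      rw [Pi.add_apply, Pi.smul_apply, cross_apply, hτ]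
      simp
      ring
    · show ∑ i, (w p i • (xG i ⨯₃ (m p • (v p + C *ᵥ (xG i - xP p))))) (1 : Fin 3) =
          (xP p ⨯₃ (m p • v p) + m p • τ (B p)) (1 : Fin 3)
      have hL : ∀ i : Fin nG,
          (w p i • (xG i ⨯₃ (m p • (v p + C *ᵥ (xG i - xP p))))) (1 : Fin 3) =
          w p i * (xG i 2 * (m p * (v p 0 + (C *ᵥ (xG i - xP p)) 0))) -
            w p i * (xG i 0 * (m p * (v p 2 + (C *ᵥ (xG i - xP p)) 2))) := by
        intro i
        rw [Pi.smul_apply, cross_apply]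
        simp [esm]
        ring
      rw [Finset.sum_congr rfl fun i _ => hL i, Finset.sum_sub_distrib,
        hmain2 2 0, hmain2 0 2]
      rw [Pi.add_apply, Pi.smul_apply, cross_apply, hτ]
      simp
      ring
    · show ∑ i, (w p i • (xG i ⨯₃ (m p • (v p + C *ᵥ (xG i - xP p))))) (2 : Fin 3) =
          (xP p ⨯₃ (m p • v p) + m p • τ (B p)) (2 : Fin 3)
      have hL : ∀ i : Fin nG,
          (w p i • (xG i ⨯₃ (m p • (v p + C *ᵥ (xG i - xP p))))) (2 : Fin 3) =
          w p i * (xG i 0 * (m p * (v p 1 + (C *ᵥ (xG i - xP p)) 1))) -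
            w p i * (xG i 1 * (m p * (v p 0 + (C *ᵥ (xG i - xP p)) 0))) := by
        intro i
        rw [Pi.smul_apply, cross_apply]
        simp [esm]
        ring
      rw [Finset.sum_congr rfl fun i _ => hL i, Finset.sum_sub_distrib,
        hmain2 0 1, hmain2 1 0]
      rw [Pi.add_apply, Pi.smul_apply, cross_apply, hτ]
      simp
      ring
  calc ∑ i, xG i ⨯₃ P i
      = ∑ i, ∑ p, w p i • (xG i ⨯₃ (m p • (v p + (B p * (D p)⁻¹) *ᵥ (xG i - xP p)))) := by
        refine Finset.sum_congr rfl fun i _ => ?_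
        rw [hP i, map_sum]
        exact Finset.sum_congr rfl fun p _ => (crossProduct (xG i)).map_smul _ _
    _ = ∑ p, ∑ i, w p i • (xG i ⨯₃ (m p • (v p + (B p * (D p)⁻¹) *ᵥ (xG i - xP p)))) :=
        Finset.sum_comm
    _ = ∑ p, (xP p ⨯₃ (m p • v p) + m p • τ (B p)) :=
        Finset.sum_congr rfl fun p _ => main p
end

section
/- (APIC G2P conserves angular momentum.) Let there be grid nodes i with positions x_i ∈ ℝ³ and velocities ṽ_i ∈ ℝ³, and particles p with masses m_p and positions x_p ∈ ℝ³, with transfer weights w_{p,i} ∈ ℝ. Define grid masses m_i := Σ_p w_{p,i} m_p, updated particle velocities v_p' := Σᵢ w_{p,i} ṽ_i, and updated affine matrices B_p' := Σᵢ w_{p,i} ṽ_i (x_i − x_p)ᵀ. Then Σ_p ( x_p × (m_p v_p') + m_p τ(B_p') ) = Σᵢ x_i × (m_i ṽ_i), where τ(A) := (A₃₂ − A₂₃, A₁₃ − A₃₁, A₂₁ − A₁₂) ∈ ℝ³ for a 3×3 matrix A, and × is the cross product in ℝ³. -/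
open Matrix Finset

/-- APIC grid-to-particle transfer conserves angular momentum: with grid masses
`m_i = ∑ p, w_{p,i} m_p`, interpolated velocities `v_p' = ∑ i, w_{p,i} ṽ_i` and affine
matrices `B_p' = ∑ i, w_{p,i} ṽ_i (x_i − x_p)ᵀ`, the total particle angular momentum
`∑ p, (x_p × m_p v_p' + m_p τ(B_p'))` equals the grid total `∑ i, x_i × m_i ṽ_i`. -/
theorem apic_g2p_conserves_angular_momentum
    {nP nG : ℕ}
    (m : Fin nP → ℝ) (xP : Fin nP → Fin 3 → ℝ)
    (xG : Fin nG → Fin 3 → ℝ) (vG : Fin nG → Fin 3 → ℝ)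
    (w : Fin nP → Fin nG → ℝ)
    (mG : Fin nG → ℝ)
    (hmG : ∀ i, mG i = ∑ p, w p i * m p)
    (v' : Fin nP → Fin 3 → ℝ)
    (hv' : ∀ p, v' p = ∑ i, w p i • vG i)
    (B' : Fin nP → Matrix (Fin 3) (Fin 3) ℝ)
    (hB' : ∀ p, B' p = ∑ i, w p i • Matrix.vecMulVec (vG i) (xG i - xP p))
    (τ : Matrix (Fin 3) (Fin 3) ℝ → Fin 3 → ℝ)
    (hτ : ∀ A, τ A = ![A 2 1 - A 1 2, A 0 2 - A 2 0, A 1 0 - A 0 1]) :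
    ∑ p, (xP p ⨯₃ (m p • v' p) + m p • τ (B' p)) = ∑ i, xG i ⨯₃ (mG i • vG i) := by
  have key : ∀ p, xP p ⨯₃ (m p • v' p) + m p • τ (B' p)
      = ∑ i, (w p i * m p) • (xG i ⨯₃ vG i) := by
    intro p
    funext c
    simp only [hv', hB', hτ, crossProduct, Pi.add_apply, Pi.smul_apply, smul_eq_mul,
      LinearMap.mk₂_apply, Finset.sum_apply, Matrix.sum_apply, Matrix.smul_apply,
      Matrix.vecMulVec_apply, Pi.sub_apply]
    fin_cases c <;>
    · simp only [Fin.isValue, Fin.zero_eta, Fin.mk_one, show (⟨2, by norm_num⟩ : Fin 3) = 2 from rfl,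
        Matrix.cons_val_zero, Matrix.cons_val_one, Matrix.head_cons,
        Matrix.cons_val_two, Matrix.tail_cons, smul_eq_mul,
        Finset.mul_sum, ← Finset.sum_sub_distrib, ← Finset.sum_add_distrib]
      exact Finset.sum_congr rfl fun i _ => by ring
  simp only [key]
  rw [Finset.sum_comm]
  refine Finset.sum_congr rfl fun i _ => ?_
  rw [hmG, LinearMap.map_smul, Finset.sum_smul]
end
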